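/- For every hybridization β ∈ {⊤,⊥}^m with opposite hybridization β̄ (β̄_i ≠ β_i for all i), and every π ∈ S_{m,n}: G_π^β(A,B,x_1,…,x_m,y_1,…,y_n) = G_{γ_nπγ_m}^{β̄}(B,A,−x_m,…,−x_1,−y_n,…,−y_1); that is, applying to G_{γ_nπγ_m}^{β̄} the substitution A ↦ B, B ↦ A, x_i ↦ −x_{m+1−i}, y_j ↦ −y_{n+1−j} yields G_π^β, where γ_n π γ_m ∈ S_{m,n} denotes the map i ↦ n+1−π(m+1−i). -/

import Mathlib

/-! # Hybrid generic pipe dreams -/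

/-- Tiles: sets of pipe segments in a unit cell. `wn` = {W–N}, `se` = {S–E},
`wnse` = {W–N, S–E}, `en` = {E–N}, `sw` = {S–W}, `ensw` = {E–N, S–W}, `we` = {W–E},
`sn` = {S–N}, `wesn` = {W–E, S–N} (crossing), `blank` = ∅. -/
inductive Tile
  | blank | wn | se | wnse | en | sw | ensw | we | sn | wesn
  deriving DecidableEq

instance : Fintype Tile where
  elems := {.blank, .wn, .se, .wnse, .en, .sw, .ensw, .we, .sn, .wesn}
  complete := fun x => by cases x <;> simp

namespace Tile

/-- The West edge is occupied. -/
def occW : Tile → Bool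
  | wn | wnse | we | wesn | sw | ensw => true
  | _ => false

/-- The East edge is occupied. -/
def occE : Tile → Bool
  | se | wnse | we | wesn | en | ensw => true
  | _ => false

/-- The North edge is occupied. -/
def occN : Tile → Bool
  | wn | wnse | sn | wesn | en | ensw => true
  | _ => false

/-- The South edge is occupied. -/
def occS : Tile → Bool
  | se | wnse | sn | wesn | sw | ensw => true
  | _ => false

/-- Elbow tiles. -/
def isElbow : Tile → Bool
  | wn | se | wnse | en | sw | ensw => true
  | _ => false

/-- Straight tiles. -/
def isStraight : Tile → Bool
  | we | sn | wesn => true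
  | _ => false

/-- Left-right mirror image of a tile (exchanging the roles of the E and W edges). -/
def mirror : Tile → Tile
  | wn => en | en => wn | se => sw | sw => se | wnse => ensw | ensw => wnse
  | t => t

end Tile

/-- The allowed tiles in a row of type `⊤` (`true`) resp. `⊥` (`false`). -/
def allowedIn (rt : Bool) (t : Tile) : Prop :=
  if rt then
    t = .blank ∨ t = .wn ∨ t = .se ∨ t = .wnse ∨ t = .we ∨ t = .sn ∨ t = .wesn
  else
    t = .blank ∨ t = .en ∨ t = .sw ∨ t = .ensw ∨ t = .we ∨ t = .sn ∨ t = .wesn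

section Routing

variable {ι : Type*}

/-- In a `⊤`-row tile, the pipe exiting East given the pipes entering from West and South. -/
def eOutT : Tile → Option ι → Option ι → Option ι
  | .se, _, s => s
  | .wnse, _, s => s
  | .we, w, _ => w
  | .wesn, w, _ => w
  | _, _, _ => none

/-- In a `⊤`-row tile, the pipe exiting North given the pipes entering from West and South. -/
def nOutT : Tile → Option ι → Option ι → Option ι
  | .wn, w, _ => w
  | .wnse, w, _ => w
  | .sn, _, s => s
  | .wesn, _, s => s
  | _, _, _ => none

/-- Tracing a `⊤`-type row left to right: the pipe on the vertical edge left of column `j`,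
where `bot j` is the pipe entering column `j` from the South and `enter` enters from the West. -/
def hTrace (t : ℕ → Tile) (bot : ℕ → Option ι) (enter : Option ι) : ℕ → Option ι
  | 0 => enter
  | j + 1 => eOutT (t j) (hTrace t bot enter j) (bot j)

/-- The pipe exiting North from column `j` of a `⊤`-type row. -/
def topOutT (t : ℕ → Tile) (bot : ℕ → Option ι) (enter : Option ι) (j : ℕ) : Option ι :=
  nOutT (t j) (hTrace t bot enter j) (bot j)

/-- The pipe exiting North from column `j` of a `⊥`-type row with `n` columns (the pipe
`enter` enters from the East); computed by mirroring. -/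
def topOutB (n : ℕ) (t : ℕ → Tile) (bot : ℕ → Option ι) (enter : Option ι) (j : ℕ) :
    Option ι :=
  topOutT (fun j' => (t (n - 1 - j')).mirror) (fun j' => bot (n - 1 - j')) enter (n - 1 - j)

/-- The pipe exiting North from column `j` of a row of type `rt`. -/
def rowTop (rt : Bool) (n : ℕ) (t : ℕ → Tile) (bot : ℕ → Option ι) (enter : Option ι)
    (j : ℕ) : Option ι :=
  if rt then topOutT t bot enter j else topOutB n t bot enter j

end Routing

/-- The row-`i` tiles of a filling, as a `ℕ`-indexed family. -/
def tilesOf {m n : ℕ} (f : Fin m → Fin n → Tile) (i : Fin m) : ℕ → Tile :=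
  fun j => if h : j < n then f i ⟨j, h⟩ else Tile.blank

/-- The pipes (labeled by the row in which they enter) crossing the horizontal line `m - r`
of the grid (so `r = 0` is the South boundary and `r = m` the North boundary). -/
def lineState (m n : ℕ) (β : Fin m → Bool) (f : Fin m → Fin n → Tile) :
    ℕ → ℕ → Option (Fin m)
  | 0, _ => none
  | r + 1, j =>
    if h : r < m then
      rowTop (β ⟨m - 1 - r, by omega⟩) n (tilesOf f ⟨m - 1 - r, by omega⟩)
        (fun j' => lineState m n β f r j') (some ⟨m - 1 - r, by omega⟩) j
    else lineState m n β f r j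

/-- The pipe exiting through the North boundary at column `j`. -/
def northExit (m n : ℕ) (β : Fin m → Bool) (f : Fin m → Fin n → Tile) (j : Fin n) :
    Option (Fin m) :=
  lineState m n β f m (j : ℕ)

private theorem filter_card_lt {m : ℕ} (i : Fin m) (p : Fin m → Prop) [DecidablePred p]
    (h : ∀ a, p a → a ≠ i) : (Finset.univ.filter p).card < m := by
  have hsub : Finset.univ.filter p ⊆ Finset.univ.erase i := fun a ha =>
    Finset.mem_erase.mpr ⟨h a (Finset.mem_filter.mp ha).2, Finset.mem_univ a⟩
  calc (Finset.univ.filter p).card ≤ (Finset.univ.erase i).card := Finset.card_le_card hsub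
    _ < Finset.univ.card := Finset.card_erase_lt_of_mem (Finset.mem_univ i)
    _ = m := by simp

/-- The number `φ_β(i)` (0-indexed) of the pipe entering in row `i`: pipes are numbered
counterclockwise starting from the NW corner. -/
def pipeNo {m : ℕ} (β : Fin m → Bool) (i : Fin m) : Fin m :=
  if hβ : β i then
    ⟨(Finset.univ.filter (fun a => a < i ∧ β a)).card,
      filter_card_lt i _ (fun a ha => ne_of_lt ha.1)⟩
  else
    ⟨(Finset.univ.filter (fun a : Fin m => β a)).card +
        (Finset.univ.filter (fun a : Fin m => i < a ∧ ¬(β a : Prop))).card, by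
      have hd : Disjoint (Finset.univ.filter (fun a : Fin m => (β a : Prop)))
          (Finset.univ.filter (fun a : Fin m => i < a ∧ ¬(β a : Prop))) := by
        rw [Finset.disjoint_left]
        intro a ha hb
        exact (Finset.mem_filter.mp hb).2.2 (Finset.mem_filter.mp ha).2
      rw [← Finset.card_union_of_disjoint hd, ← Finset.filter_or]
      refine filter_card_lt i _ ?_
      rintro a (h1 | ⟨h2, _⟩)
      · rintro rfl; exact hβ h1
      · exact ne_of_gt h2⟩

/-- A hybrid generic pipe dream of type `β`: allowed tiles, matching of occupied edges,
unoccupied South boundary, and entering conditions on the West/East boundaries. -/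
def IsHGPD (m n : ℕ) (β : Fin m → Bool) (f : Fin m → Fin n → Tile) : Prop :=
  (∀ i j, allowedIn (β i) (f i j)) ∧
  (∀ (i : Fin m) (j : Fin n) (h : (j : ℕ) + 1 < n),
    (f i j).occE = (f i ⟨j + 1, h⟩).occW) ∧
  (∀ (i : Fin m) (h : (i : ℕ) + 1 < m) (j : Fin n),
    (f i j).occS = (f ⟨i + 1, h⟩ j).occN) ∧
  (∀ (i : Fin m) (j : Fin n), (i : ℕ) + 1 = m → (f i j).occS = false) ∧
  (∀ (i : Fin m) (j : Fin n), (j : ℕ) = 0 → (f i j).occW = β i) ∧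
  (∀ (i : Fin m) (j : Fin n), (j : ℕ) + 1 = n → (f i j).occE = !β i)

/-- The pipe dream has connectivity `π`: the pipe numbered `k` exits the North side in
column `π(k)`; equivalently the pipe entering in row `i` exits in column `π(φ_β(i))`. -/
def Connectivity (m n : ℕ) (β : Fin m → Bool) (f : Fin m → Fin n → Tile)
    (π : Fin m ↪ Fin n) : Prop :=
  ∀ i : Fin m, northExit m n β f (π (pipeNo β i)) = some i

/-! ## Weights -/

/-- Variable set for `ℤ[x_1,…,x_m,y_1,…,y_n,A,B]`: `none` is `B`, `some (inl i)` is `x_i`,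
`some (inr (inl j))` is `y_j`, `some (inr (inr ()))` is `A`. -/
abbrev PDVar (m n : ℕ) := Option (Fin m ⊕ (Fin n ⊕ Unit))

noncomputable def xP (m n : ℕ) (i : Fin m) : MvPolynomial (PDVar m n) ℤ :=
  MvPolynomial.X (some (Sum.inl i))

noncomputable def yP (m n : ℕ) (j : Fin n) : MvPolynomial (PDVar m n) ℤ :=
  MvPolynomial.X (some (Sum.inr (Sum.inl j)))

noncomputable def AP (m n : ℕ) : MvPolynomial (PDVar m n) ℤ :=
  MvPolynomial.X (some (Sum.inr (Sum.inr ())))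

noncomputable def BP (m n : ℕ) : MvPolynomial (PDVar m n) ℤ :=
  MvPolynomial.X none

/-- The weight of the tile in cell `(i,j)` of a row of type `rt` whose entering pipe is
numbered `k`. -/
noncomputable def tileWt (m n : ℕ) (rt : Bool) (t : Tile) (k : Fin m) (j : Fin n) :
    MvPolynomial (PDVar m n) ℤ :=
  if t.isElbow then AP m n + BP m n
  else if t.isStraight then
    (if rt then AP m n + xP m n k - yP m n j else BP m n - xP m n k + yP m n j)
  else
    (if rt then BP m n - xP m n k + yP m n j else AP m n + xP m n k - yP m n j)

/-- The weight of a pipe dream: the product of the weights of its tiles. -/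
noncomputable def pdWeight (m n : ℕ) (β : Fin m → Bool) (f : Fin m → Fin n → Tile) :
    MvPolynomial (PDVar m n) ℤ :=
  ∏ i : Fin m, ∏ j : Fin n, tileWt m n (β i) (f i j) (pipeNo β i) j

open Classical in
/-- The generic pipe dream polynomial `G_π^β`: the sum of the weights of all hybrid generic
pipe dreams of type `β` with connectivity `π`. -/
noncomputable def GPD (m n : ℕ) (β : Fin m → Bool) (π : Fin m ↪ Fin n) :
    MvPolynomial (PDVar m n) ℤ :=
  ∑ f ∈ Finset.univ.filter
      (fun f : Fin m → Fin n → Tile => IsHGPD m n β f ∧ Connectivity m n β f π),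
    pdWeight m n β f

/-- `γ_n π γ_m ∈ S_{m,n}`: the map `i ↦ n+1−π(m+1−i)`. -/
def revConj {m n : ℕ} (π : Fin m ↪ Fin n) : Fin m ↪ Fin n :=
  ⟨fun i => (π i.rev).rev, fun a b h =>
    Fin.rev_injective (π.injective (Fin.rev_injective h))⟩

/-- The substitution `A ↦ B`, `B ↦ A`, `x_i ↦ −x_{m+1−i}`, `y_j ↦ −y_{n+1−j}`. -/
noncomputable def mirrorSub (m n : ℕ) : PDVar m n → MvPolynomial (PDVar m n) ℤ
  | none => AP m n
  | some (Sum.inl i) => - xP m n i.rev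
  | some (Sum.inr (Sum.inl j)) => - yP m n j.rev
  | some (Sum.inr (Sum.inr _)) => BP m n

/-! ## Auxiliary lemmas for the mirror symmetry -/

namespace Tile

lemma mirror_mirror (t : Tile) : t.mirror.mirror = t := by cases t <;> rfl
lemma isElbow_mirror (t : Tile) : t.mirror.isElbow = t.isElbow := by cases t <;> rfl
lemma isStraight_mirror (t : Tile) : t.mirror.isStraight = t.isStraight := by cases t <;> rfl
lemma occW_mirror (t : Tile) : t.mirror.occW = t.occE := by cases t <;> rfl
lemma occE_mirror (t : Tile) : t.mirror.occE = t.occW := by cases t <;> rfl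
lemma occN_mirror (t : Tile) : t.mirror.occN = t.occN := by cases t <;> rfl
lemma occS_mirror (t : Tile) : t.mirror.occS = t.occS := by cases t <;> rfl

end Tile

lemma allowedIn_mirror (rt : Bool) (t : Tile) :
    allowedIn (!rt) t.mirror ↔ allowedIn rt t := by
  cases rt <;> cases t <;> simp [allowedIn, Tile.mirror]

section RoutingAux

variable {ι : Type*}

lemma hTrace_congr (t t' : ℕ → Tile) (b b' : ℕ → Option ι) (e : Option ι) :
    ∀ j, (∀ k < j, t k = t' k) → (∀ k < j, b k = b' k) →
      hTrace t b e j = hTrace t' b' e j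
  | 0, _, _ => rfl
  | j + 1, ht, hb => by
    simp only [hTrace]
    rw [ht j (by omega), hb j (by omega),
      hTrace_congr t t' b b' e j (fun k hk => ht k (by omega)) (fun k hk => hb k (by omega))]

lemma topOutT_congr (t t' : ℕ → Tile) (b b' : ℕ → Option ι) (e : Option ι) (j : ℕ)
    (ht : ∀ k ≤ j, t k = t' k) (hb : ∀ k ≤ j, b k = b' k) :
    topOutT t b e j = topOutT t' b' e j := by
  unfold topOutT
  rw [ht j le_rfl, hb j le_rfl,
    hTrace_congr t t' b b' e j (fun k hk => ht k hk.le) (fun k hk => hb k hk.le)]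

end RoutingAux

/-- The left-right mirror image of a filling. -/
def mirrorF {m n : ℕ} (f : Fin m → Fin n → Tile) : Fin m → Fin n → Tile :=
  fun i j => (f i j.rev).mirror

lemma mirrorF_mirrorF {m n : ℕ} (f : Fin m → Fin n → Tile) : mirrorF (mirrorF f) = f := by
  funext i j
  simp [mirrorF, Tile.mirror_mirror, Fin.rev_rev]

lemma tilesOf_mirrorF {m n : ℕ} (f : Fin m → Fin n → Tile) (i : Fin m) (k : ℕ) (hk : k < n) :
    tilesOf (mirrorF f) i k = (tilesOf f i (n - 1 - k)).mirror := by
  have hk' : n - 1 - k < n := by omega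
  have hrev : (⟨k, hk⟩ : Fin n).rev = ⟨n - 1 - k, hk'⟩ := by
    apply Fin.ext
    rw [Fin.val_rev]
    show n - (k + 1) = n - 1 - k
    omega
  simp only [tilesOf, dif_pos hk, dif_pos hk', mirrorF, hrev]

lemma lineState_mirrorF (m n : ℕ) (β : Fin m → Bool) (f : Fin m → Fin n → Tile) :
    ∀ r, ∀ j, j < n →
      lineState m n β (mirrorF f) r j = lineState m n (fun i => !β i) f r (n - 1 - j)
  | 0, _, _ => rfl
  | r + 1, j, hj => by
    simp only [lineState]
    split
    · next h =>
      have IH : ∀ k, k < n →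
          lineState m n β (mirrorF f) r k = lineState m n (fun i => !β i) f r (n - 1 - k) :=
        fun k hk => lineState_mirrorF m n β f r k hk
      set row : Fin m := ⟨m - 1 - r, by omega⟩
      cases hb : β row
      · -- g-row of type ⊥, f-row of type ⊤
        simp only [rowTop, hb, Bool.not_false, topOutB, Bool.false_eq_true, if_false,
          if_true]
        refine topOutT_congr _ _ _ _ _ _ (fun k hk => ?_) (fun k hk => ?_)
        · have hk' : k < n := by omega
          rw [tilesOf_mirrorF f row (n - 1 - k) (by omega), Tile.mirror_mirror]
          congr 1
          omega
        · have hk' : n - 1 - k < n := by omega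
          rw [IH (n - 1 - k) hk']
          congr 1
          omega
      · -- g-row of type ⊤, f-row of type ⊥
        simp only [rowTop, hb, Bool.not_true, topOutB, Bool.false_eq_true, if_false,
          if_true]
        have hjj : n - 1 - (n - 1 - j) = j := by omega
        rw [hjj]
        refine topOutT_congr _ _ _ _ _ _ (fun k hk => ?_) (fun k hk => ?_)
        · exact tilesOf_mirrorF f row k (by omega)
        · exact IH k (by omega)
    · exact lineState_mirrorF m n β f r j hj

lemma northExit_mirrorF (m n : ℕ) (β : Fin m → Bool) (f : Fin m → Fin n → Tile) (j : Fin n) :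
    northExit m n β (mirrorF f) j = northExit m n (fun i => !β i) f j.rev := by
  unfold northExit
  rw [lineState_mirrorF m n β f m j j.isLt]
  congr 1
  rw [Fin.val_rev]
  omega

private lemma card_filter_split {m : ℕ} (i : Fin m) (p : Fin m → Prop) [DecidablePred p]
    (hi : p i) :
    (Finset.univ.filter p).card
      = (Finset.univ.filter (fun a => a < i ∧ p a)).card
        + (Finset.univ.filter (fun a => i < a ∧ p a)).card + 1 := by
  have hset : Finset.univ.filter p
      = (Finset.univ.filter (fun a => a < i ∧ p a))
        ∪ ((Finset.univ.filter (fun a => i < a ∧ p a)) ∪ {i}) := by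
    ext a
    simp only [Finset.mem_filter, Finset.mem_univ, true_and, Finset.mem_union,
      Finset.mem_singleton]
    constructor
    · intro ha
      rcases lt_trichotomy a i with h | h | h
      · exact Or.inl ⟨h, ha⟩
      · exact Or.inr (Or.inr h)
      · exact Or.inr (Or.inl ⟨h, ha⟩)
    · rintro (⟨_, h⟩ | ⟨_, h⟩ | rfl)
      · exact h
      · exact h
      · exact hi
  have hd2 : Disjoint (Finset.univ.filter (fun a => i < a ∧ p a)) ({i} : Finset (Fin m)) := by
    rw [Finset.disjoint_right]
    intro a ha hb
    rw [Finset.mem_singleton] at ha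
    subst ha
    exact lt_irrefl a (Finset.mem_filter.mp hb).2.1
  have hd1 : Disjoint (Finset.univ.filter (fun a => a < i ∧ p a))
      ((Finset.univ.filter (fun a => i < a ∧ p a)) ∪ {i}) := by
    rw [Finset.disjoint_left]
    intro a ha hb
    have h1 := (Finset.mem_filter.mp ha).2.1
    rcases Finset.mem_union.mp hb with hb | hb
    · exact absurd ((Finset.mem_filter.mp hb).2.1.trans h1) (lt_irrefl i)
    · rw [Finset.mem_singleton] at hb
      subst hb
      exact lt_irrefl a h1
  rw [hset, Finset.card_union_of_disjoint hd1, Finset.card_union_of_disjoint hd2,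
    Finset.card_singleton]
  omega

lemma pipeNo_not {m : ℕ} (β : Fin m → Bool) (i : Fin m) :
    pipeNo (fun a => !β a) i = (pipeNo β i).rev := by
  classical
  have htot : (Finset.univ.filter (fun a : Fin m => (β a : Prop))).card
      + (Finset.univ.filter (fun a : Fin m => ¬(β a : Prop))).card = m := by
    rw [Finset.card_filter_add_card_filter_not]
    simp
  apply Fin.ext
  rw [Fin.val_rev]
  cases hb : β i
  · -- β i = false, so (!β) i = true
    have hsplit := card_filter_split i (fun a => ¬(β a : Prop)) (by simp [hb])
    simp only [pipeNo, hb, Bool.not_false, dif_pos, dif_neg, Bool.false_eq_true,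
      not_false_eq_true]
    have e1 : Finset.univ.filter (fun a : Fin m => a < i ∧ ((!β a : Bool) : Prop))
        = Finset.univ.filter (fun a : Fin m => a < i ∧ ¬(β a : Prop)) :=
      Finset.filter_congr (fun a _ => by simp)
    have e2 : Finset.univ.filter (fun a : Fin m => i < a ∧ ¬(β a : Prop))
        = Finset.univ.filter (fun a : Fin m => i < a ∧ ¬((β a : Bool) : Prop)) := rfl
    rw [e1]
    beta_reduce at hsplit ⊢
    omega
  · -- β i = true, so (!β) i = false
    have hsplit := card_filter_split i (fun a => (β a : Prop)) (by simp [hb])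
    simp only [pipeNo, hb, dif_pos, dif_neg, Bool.not_true, Bool.false_eq_true,
      not_false_eq_true]
    have e1 : Finset.univ.filter (fun a : Fin m => ((!β a : Bool) : Prop))
        = Finset.univ.filter (fun a : Fin m => ¬(β a : Prop)) :=
      Finset.filter_congr (fun a _ => by simp)
    have e2 : Finset.univ.filter (fun a : Fin m => i < a ∧ ¬((!β a : Bool) : Prop))
        = Finset.univ.filter (fun a : Fin m => i < a ∧ (β a : Prop)) :=
      Finset.filter_congr (fun a _ => by simp)
    rw [e1, e2]
    beta_reduce at hsplit ⊢
    omega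

lemma isHGPD_mirrorF {m n : ℕ} {β : Fin m → Bool} {f : Fin m → Fin n → Tile}
    (hf : IsHGPD m n β f) : IsHGPD m n (fun i => !β i) (mirrorF f) := by
  obtain ⟨h1, h2, h3, h4, h5, h6⟩ := hf
  refine ⟨?_, ?_, ?_, ?_, ?_, ?_⟩
  · intro i j
    exact (allowedIn_mirror (β i) (f i j.rev)).mpr (h1 i j.rev)
  · intro i j h
    simp only [mirrorF, Tile.occE_mirror, Tile.occW_mirror]
    have hn : (j : ℕ) + 2 ≤ n := h
    have e1 : j.rev = ⟨(n - 2 - (j : ℕ)) + 1, by omega⟩ := by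
      apply Fin.ext
      rw [Fin.val_rev]
      show n - ((j : ℕ) + 1) = (n - 2 - (j : ℕ)) + 1
      omega
    have e2 : (⟨(j : ℕ) + 1, h⟩ : Fin n).rev = ⟨n - 2 - (j : ℕ), by omega⟩ := by
      apply Fin.ext
      rw [Fin.val_rev]
      show n - (((j : ℕ) + 1) + 1) = n - 2 - (j : ℕ)
      omega
    rw [e1, e2]
    exact (h2 i ⟨n - 2 - (j : ℕ), by omega⟩ (by simp; omega)).symm
  · intro i h j
    simp only [mirrorF, Tile.occS_mirror, Tile.occN_mirror]
    exact h3 i h j.rev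
  · intro i j h
    simp only [mirrorF, Tile.occS_mirror]
    exact h4 i j.rev h
  · intro i j h
    simp only [mirrorF, Tile.occW_mirror]
    have e1 : j.rev = ⟨n - 1, by omega⟩ := by
      apply Fin.ext
      rw [Fin.val_rev]
      show n - ((j : ℕ) + 1) = n - 1
      omega
    rw [e1, h6 i ⟨n - 1, by omega⟩ (by simp; omega)]
  · intro i j h
    simp only [mirrorF, Tile.occE_mirror]
    have e1 : j.rev = ⟨0, by omega⟩ := by
      apply Fin.ext
      rw [Fin.val_rev]
      show n - ((j : ℕ) + 1) = 0
      omega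
    rw [e1, h5 i ⟨0, by omega⟩ rfl]
    simp

lemma connectivity_mirrorF {m n : ℕ} {β : Fin m → Bool} {f : Fin m → Fin n → Tile}
    {π : Fin m ↪ Fin n} (h : Connectivity m n β f π) :
    Connectivity m n (fun i => !β i) (mirrorF f) (revConj π) := by
  intro i
  have hnn : (fun a : Fin m => !(!β a)) = β := by funext a; simp
  rw [northExit_mirrorF m n (fun a => !β a) f, hnn]
  have hp : pipeNo (fun a => !β a) i = (pipeNo β i).rev := pipeNo_not β i
  show northExit m n β f ((revConj π (pipeNo (fun a => !β a) i)).rev) = some i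
  rw [hp]
  have : (revConj π ((pipeNo β i).rev)).rev = π (pipeNo β i) := by
    show (π (pipeNo β i).rev.rev).rev.rev = π (pipeNo β i)
    rw [Fin.rev_rev, Fin.rev_rev]
  rw [this]
  exact h i

lemma revConj_revConj {m n : ℕ} (π : Fin m ↪ Fin n) : revConj (revConj π) = π := by
  ext i
  show ((π i.rev.rev).rev.rev : ℕ) = (π i : ℕ)
  rw [Fin.rev_rev, Fin.rev_rev]

/-! ## Weights under the mirror substitution -/

lemma aeval_tileWt (m n : ℕ) (rt : Bool) (t : Tile) (k : Fin m) (j : Fin n) :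
    MvPolynomial.aeval (mirrorSub m n) (tileWt m n (!rt) t k j)
      = tileWt m n rt t k.rev j.rev := by
  have hA : MvPolynomial.aeval (mirrorSub m n) (AP m n) = BP m n := by
    simp [AP, mirrorSub]
  have hB : MvPolynomial.aeval (mirrorSub m n) (BP m n) = AP m n := by
    simp [BP, mirrorSub]
  have hx : MvPolynomial.aeval (mirrorSub m n) (xP m n k) = - xP m n k.rev := by
    simp [xP, mirrorSub]
  have hy : MvPolynomial.aeval (mirrorSub m n) (yP m n j) = - yP m n j.rev := by
    simp [yP, mirrorSub]
  unfold tileWt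
  cases h1 : t.isElbow <;> cases h2 : t.isStraight <;> cases rt <;>
    simp only [h1, h2, if_true, if_false, Bool.not_true, Bool.not_false,
      Bool.false_eq_true, map_add, map_sub, hA, hB, hx, hy] <;> ring

lemma tileWt_mirror (m n : ℕ) (rt : Bool) (t : Tile) (k : Fin m) (j : Fin n) :
    tileWt m n rt t.mirror k j = tileWt m n rt t k j := by
  unfold tileWt
  rw [Tile.isElbow_mirror, Tile.isStraight_mirror]

lemma pdWeight_mirrorF (m n : ℕ) (β : Fin m → Bool) (f : Fin m → Fin n → Tile) :
    MvPolynomial.aeval (mirrorSub m n) (pdWeight m n (fun i => !β i) f)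
      = pdWeight m n β (mirrorF f) := by
  unfold pdWeight
  rw [map_prod]
  refine Finset.prod_congr rfl fun i _ => ?_
  rw [map_prod]
  have hp : pipeNo (fun a => !β a) i = (pipeNo β i).rev := pipeNo_not β i
  calc ∏ j : Fin n,
      MvPolynomial.aeval (mirrorSub m n)
        (tileWt m n (!β i) (f i j) (pipeNo (fun a => !β a) i) j)
      = ∏ j : Fin n, tileWt m n (β i) (f i j) (pipeNo β i) j.rev := by
        refine Finset.prod_congr rfl fun j _ => ?_
        rw [hp, aeval_tileWt m n (β i) (f i j) ((pipeNo β i).rev) j, Fin.rev_rev]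
    _ = ∏ j : Fin n, tileWt m n (β i) (f i j.rev) (pipeNo β i) j := by
        refine Fintype.prod_equiv Fin.revPerm _ _ fun j => ?_
        simp [Fin.rev_rev]
    _ = ∏ j : Fin n, tileWt m n (β i) (mirrorF f i j) (pipeNo β i) j := by
        refine Finset.prod_congr rfl fun j _ => ?_
        rw [mirrorF, tileWt_mirror]

/-- Corollary of the mirror bijection:
`G_π^β(A,B,x_1,…,x_m,y_1,…,y_n) = G_{γ_nπγ_m}^{β̄}(B,A,−x_m,…,−x_1,−y_n,…,−y_1)`. -/
theorem GPD_mirror_symmetry (m n : ℕ) (hm : 1 ≤ m) (hmn : m ≤ n)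
    (β : Fin m → Bool) (π : Fin m ↪ Fin n) :
    GPD m n β π =
      MvPolynomial.aeval (mirrorSub m n)
        (GPD m n (fun i => !β i) (revConj π)) := by
  classical
  unfold GPD
  rw [map_sum]
  have hnn : (fun a : Fin m => !(!β a)) = β := by funext a; simp
  refine Finset.sum_nbij' (fun f => mirrorF f) (fun f => mirrorF f) ?_ ?_ ?_ ?_ ?_
  · intro g hg
    rw [Finset.mem_filter] at hg ⊢
    obtain ⟨-, hH, hC⟩ := hg
    exact ⟨Finset.mem_univ _, isHGPD_mirrorF hH, connectivity_mirrorF hC⟩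
  · intro f hf
    rw [Finset.mem_filter] at hf ⊢
    obtain ⟨-, hH, hC⟩ := hf
    have h1 := isHGPD_mirrorF hH
    have h2 := connectivity_mirrorF hC
    rw [hnn] at h1 h2
    rw [revConj_revConj] at h2
    exact ⟨Finset.mem_univ _, h1, h2⟩
  · intro g _
    exact mirrorF_mirrorF g
  · intro f _
    exact mirrorF_mirrorF f
  · intro g _
    rw [pdWeight_mirrorF m n β (mirrorF g), mirrorF_mirrorF]
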